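/- Let μ be a finite measure and f ∈ L²(μ). Set φ_k := (1/k) f and ε_k := 1/k². Then φ_k → 0 in L²(μ), ε_k → 0, and P_{ε_k} ∘ φ_k → P ∘ f in L¹(μ). Consequently the pair (P ∘ f, 0) is admissible. -/

import Mathlib

open MeasureTheory Filter Topology

set_option maxHeartbeats 1000000
set_option synthInstance.maxHeartbeats 400000

noncomputable section

/-- The smoothed level set projection `P_ε`. -/
def Pe (ε t : ℝ) : ℝ := max 0 (min 1 (1 + t / ε))

/-- The level set projection `P` (Heaviside function, `P t = 1` iff `0 ≤ t`). -/
def Pstep (t : ℝ) : ℝ := if 0 ≤ t then 1 else 0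

lemma Pe_continuous (ε : ℝ) : Continuous (Pe ε) :=
  continuous_const.max (continuous_const.min (continuous_const.add (continuous_id.div_const ε)))

lemma Pe_bound (ε t : ℝ) : ‖Pe ε t‖ ≤ 1 := by
  unfold Pe
  rw [Real.norm_eq_abs, abs_le]
  refine ⟨by linarith [le_max_left (0:ℝ) (min 1 (1 + t / ε))], ?_⟩
  exact max_le (by norm_num) (min_le_left _ _)

lemma Pstep_measurable : Measurable Pstep :=
  Measurable.ite measurableSet_Ici measurable_const measurable_const

lemma Pstep_bound (t : ℝ) : ‖Pstep t‖ ≤ 1 := by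
  unfold Pstep; split <;> simp

variable {X : Type*} [MeasurableSpace X] (μ : Measure X) [IsFiniteMeasure μ]

/-- Composition `P_ε ∘ f` of the smoothed projection with an `L²` function, as an
element of `L¹` (the measure being finite). -/
def compPe (ε : ℝ) (f : Lp ℝ 2 μ) : Lp ℝ 1 μ :=
  (MemLp.of_bound ((Pe_continuous ε).comp_aestronglyMeasurable (Lp.aestronglyMeasurable f)) 1
    (Eventually.of_forall fun x => Pe_bound ε (f x))).toLp _

/-- Composition `P ∘ f` of the discontinuous projection with an `L²` function, as an
element of `L¹`. -/
def compP (f : Lp ℝ 2 μ) : Lp ℝ 1 μ :=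
  (MemLp.of_bound
    (Pstep_measurable.comp_aemeasurable (Lp.aestronglyMeasurable f).aemeasurable).aestronglyMeasurable 1
    (Eventually.of_forall fun x => Pstep_bound (f x))).toLp _

/-- A pair `(z, φ) ∈ L¹ × L²` is admissible if `z` is the `L¹` limit of `P_{ε_k} ∘ φ_k`
for some positive `ε_k → 0` and some `φ_k → φ` in `L²`. -/
def Admissible (z : Lp ℝ 1 μ) (φ : Lp ℝ 2 μ) : Prop :=
  ∃ (εs : ℕ → ℝ) (φs : ℕ → Lp ℝ 2 μ),
    (∀ k, 0 < εs k) ∧ Tendsto εs atTop (𝓝 0) ∧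
    Tendsto φs atTop (𝓝 φ) ∧
    Tendsto (fun k => compPe μ (εs k) (φs k)) atTop (𝓝 z)


lemma Pe_arg_eq (k : ℕ) (y : ℝ) :
    Pe ((((k : ℝ) + 1) ^ 2)⁻¹) (((k : ℝ) + 1)⁻¹ * y)
      = max 0 (min 1 (1 + ((k : ℝ) + 1) * y)) := by
  have hk : ((k : ℝ) + 1) ≠ 0 := by positivity
  have h : ((k : ℝ) + 1)⁻¹ * y / ((((k : ℝ) + 1) ^ 2)⁻¹) = ((k : ℝ) + 1) * y := by
    field_simp
  unfold Pe
  rw [h]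

lemma tendsto_Pe_pointwise (y : ℝ) :
    Tendsto (fun k : ℕ => max 0 (min 1 (1 + ((k : ℝ) + 1) * y))) atTop (𝓝 (Pstep y)) := by
  rcases le_or_gt 0 y with hy | hy
  · have hconst : (fun k : ℕ => max 0 (min 1 (1 + ((k : ℝ) + 1) * y))) = fun _ => 1 := by
      funext k
      have h1 : (1 : ℝ) ≤ 1 + ((k : ℝ) + 1) * y := by nlinarith [Nat.cast_nonneg (α := ℝ) k]
      rw [min_eq_left h1]
      norm_num
    rw [hconst, Pstep, if_pos hy]
    exact tendsto_const_nhds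
  · have hPs : Pstep y = 0 := if_neg (not_le.mpr hy)
    rw [hPs]
    have hbot : Tendsto (fun k : ℕ => 1 + ((k : ℝ) + 1) * y) atTop atBot := by
      have h1 : Tendsto (fun k : ℕ => ((k : ℝ) + 1)) atTop atTop :=
        tendsto_atTop_add_const_right _ 1 tendsto_natCast_atTop_atTop
      have h2 : Tendsto (fun k : ℕ => ((k : ℝ) + 1) * y) atTop atBot :=
        Tendsto.atTop_mul_const_of_neg hy h1
      simpa using tendsto_atBot_add_const_left atTop 1 h2
    have hev : ∀ᶠ k : ℕ in atTop, max 0 (min 1 (1 + ((k : ℝ) + 1) * y)) = 0 := by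
      filter_upwards [hbot.eventually (eventually_le_atBot 0)] with k hk
      rw [min_eq_right (hk.trans zero_le_one), max_eq_left hk]
    exact Tendsto.congr' (hev.mono fun k h => h.symm) tendsto_const_nhds

/-- Example, item 2: for `f ∈ L²(μ)`, setting `φ_k := f/k` and `ε_k := 1/k²`
(indexed so that `k ≥ 1`), one has `φ_k → 0` in `L²(μ)`, `ε_k → 0`, and
`P_{ε_k} ∘ φ_k → P ∘ f` in `L¹(μ)`; consequently the pair `(P ∘ f, 0)` is
admissible. -/
theorem pair_compP_zero_admissible
    {X : Type*} [MeasurableSpace X] (μ : Measure X) [IsFiniteMeasure μ]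
    (f : Lp ℝ 2 μ) :
    Tendsto (fun k : ℕ => ((k : ℝ) + 1)⁻¹ • f) atTop (𝓝 (0 : Lp ℝ 2 μ)) ∧
    Tendsto (fun k : ℕ => (((k : ℝ) + 1) ^ 2)⁻¹) atTop (𝓝 (0 : ℝ)) ∧
    Tendsto (fun k : ℕ => compPe μ ((((k : ℝ) + 1) ^ 2)⁻¹) (((k : ℝ) + 1)⁻¹ • f))
      atTop (𝓝 (compP μ f)) ∧
    Admissible μ (compP μ f) 0 := by
  have hc : Tendsto (fun k : ℕ => ((k : ℝ) + 1)⁻¹) atTop (𝓝 0) := by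
    simpa [one_div] using tendsto_one_div_add_atTop_nhds_zero_nat (𝕜 := ℝ)
  have h1 : Tendsto (fun k : ℕ => ((k : ℝ) + 1)⁻¹ • f) atTop (𝓝 (0 : Lp ℝ 2 μ)) := by
    simpa using hc.smul_const f
  have h2 : Tendsto (fun k : ℕ => (((k : ℝ) + 1) ^ 2)⁻¹) atTop (𝓝 (0 : ℝ)) := by
    have := (hc.pow 2)
    simpa [inv_pow] using this
  have h3 : Tendsto (fun k : ℕ => compPe μ ((((k : ℝ) + 1) ^ 2)⁻¹) (((k : ℝ) + 1)⁻¹ • f))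
      atTop (𝓝 (compP μ f)) := by
    set F : ℕ → X → ℝ := fun k x =>
      Pe ((((k : ℝ) + 1) ^ 2)⁻¹) ((((k : ℝ) + 1)⁻¹ • f : Lp ℝ 2 μ) x) with hFdef
    set G : X → ℝ := fun x => Pstep (f x) with hGdef
    have hF : ∀ k, MemLp (F k) 1 μ := fun k =>
      MemLp.of_bound ((Pe_continuous _).comp_aestronglyMeasurable
        (Lp.aestronglyMeasurable _)) 1 (Eventually.of_forall fun x => Pe_bound _ _)
    have hG : MemLp G 1 μ :=
      MemLp.of_bound
        (Pstep_measurable.comp_aemeasurable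
          (Lp.aestronglyMeasurable f).aemeasurable).aestronglyMeasurable 1
        (Eventually.of_forall fun x => Pstep_bound _)
    have hkey : Tendsto (fun k => (hF k).toLp (F k)) atTop (𝓝 (hG.toLp G)) := by
      rw [Lp.tendsto_Lp_iff_tendsto_eLpNorm'' F hF G hG]
      have hdom : Tendsto (fun k => ∫⁻ x, ENNReal.ofReal ‖F k x - G x‖ ∂μ) atTop (𝓝 0) := by
        refine tendsto_lintegral_norm_of_dominated_convergence
          (fun k => (Pe_continuous _).comp_aestronglyMeasurable (Lp.aestronglyMeasurable _))
          (hasFiniteIntegral_const 1)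
          (fun k => Eventually.of_forall fun x => Pe_bound _ _) ?_
        have hae : ∀ᵐ x ∂μ, ∀ k : ℕ,
            (((((k : ℝ) + 1)⁻¹ • f : Lp ℝ 2 μ)) : X → ℝ) x = ((k : ℝ) + 1)⁻¹ * f x := by
          rw [ae_all_iff]
          intro k
          filter_upwards [Lp.coeFn_smul (((k : ℝ) + 1)⁻¹) f] with x hx
          simpa using hx
        filter_upwards [hae] with x hx
        have : (fun k : ℕ => F k x)
            = fun k : ℕ => max 0 (min 1 (1 + ((k : ℝ) + 1) * f x)) := by
          funext k
          rw [hFdef]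
          simp only
          rw [hx k, Pe_arg_eq]
        rw [this]
        exact tendsto_Pe_pointwise (f x)
      have := hdom
      simp only [ofReal_norm] at this
      refine Tendsto.congr (fun k => ?_) this
      rw [eLpNorm_one_eq_lintegral_enorm]
      rfl
    exact hkey
  refine ⟨h1, h2, h3, ?_⟩
  exact ⟨fun k => (((k : ℝ) + 1) ^ 2)⁻¹, fun k => ((k : ℝ) + 1)⁻¹ • f,
    fun k => by positivity, h2, h1, h3⟩
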